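/- Let h_1, …, h_{δ+n} be general linear forms on ℂ^{n+1} with δ ≥ 1. For d ≤ δ, the products h_I = ∏_{i∈I} h_i over all subsets I ⊆ {1,…,δ+n} with |I| = d span the space S^d(ℂ^{n+1})* of degree-d forms. -/

import Mathlib

open MvPolynomial

/-- The linear form with coefficient vector `c`, as a polynomial. -/
noncomputable def linForm {n : ℕ} (c : Fin n → ℂ) : MvPolynomial (Fin n) ℂ :=
  ∑ i, MvPolynomial.C (c i) * MvPolynomial.X i

noncomputable def linFormL (n : ℕ) : (Fin n → ℂ) →ₗ[ℂ] MvPolynomial (Fin n) ℂ where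
  toFun := linForm
  map_add' x y := by simp [linForm, add_mul, Finset.sum_add_distrib]
  map_smul' a x := by simp [linForm, Finset.smul_sum, smul_eq_C_mul, mul_assoc]

lemma key (n δ e : ℕ) (he : e + 1 ≤ δ)
    (h : Fin (δ + n) → (Fin (n + 1) → ℂ))
    (hgen : ∀ T : Finset (Fin (δ + n)), T.card = n + 1 →
      LinearIndependent ℂ (fun i : T => h i))
    (k : Fin (n + 1)) (I : Finset (Fin (δ + n))) (hI : I.card = e) :
    MvPolynomial.X k * ∏ i ∈ I, linForm (h i) ∈
      Submodule.span ℂ {p | ∃ J : Finset (Fin (δ + n)), J.card = e + 1 ∧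
        p = ∏ i ∈ J, linForm (h i)} := by
  have hcard : n + 1 ≤ Iᶜ.card := by
    rw [Finset.card_compl, hI, Fintype.card_fin]; omega
  obtain ⟨T, hTsub, hTcard⟩ := Finset.exists_subset_card_eq hcard
  have hspan : Submodule.span ℂ (Set.range fun i : T => h i) = ⊤ :=
    haveI : Nonempty T := Finset.Nonempty.to_subtype (Finset.card_pos.mp (by simp [hTcard]))
    (hgen T hTcard).span_eq_top_of_card_eq_finrank (by simp [hTcard])
  obtain ⟨c, hc⟩ := (Submodule.mem_span_range_iff_exists_fun ℂ).1
    (hspan ▸ Submodule.mem_top : (Pi.single k 1 : Fin (n+1) → ℂ) ∈ _)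
  have hX : MvPolynomial.X k = ∑ j : T, c j • linForm (h j) := by
    have h1 : linFormL (n+1) (Pi.single k 1) = MvPolynomial.X k := by
      show linForm (Pi.single k 1) = _
      simp [linFormL, linForm, Pi.single_apply, apply_ite MvPolynomial.C, ite_mul]
    rw [← h1, ← hc, map_sum]
    simp only [map_smul]
    rfl
  rw [hX, Finset.sum_mul]
  refine Submodule.sum_mem _ fun j _ => ?_
  rw [smul_mul_assoc]
  refine Submodule.smul_mem _ _ (Submodule.subset_span ?_)
  have hjI : (j : Fin (δ + n)) ∉ I := by
    have := hTsub j.2; simpa [Finset.mem_compl] using this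
  exact ⟨insert (j : Fin (δ + n)) I, by rw [Finset.card_insert_of_notMem hjI, hI],
    (Finset.prod_insert (f := fun i => linForm (h i)) hjI).symm⟩

lemma monomial_mem (n δ : ℕ) (h : Fin (δ + n) → (Fin (n + 1) → ℂ))
    (hgen : ∀ T : Finset (Fin (δ + n)), T.card = n + 1 →
      LinearIndependent ℂ (fun i : T => h i)) :
    ∀ d : ℕ, d ≤ δ → ∀ α : Fin (n + 1) →₀ ℕ, α.degree = d → ∀ c : ℂ,
      (monomial α c : MvPolynomial (Fin (n + 1)) ℂ) ∈
        Submodule.span ℂ {p | ∃ I : Finset (Fin (δ + n)), I.card = d ∧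
          p = ∏ i ∈ I, linForm (h i)} := by
  intro d
  induction d with
  | zero =>
    intro _ α hα c
    have hα0 : α = 0 := (Finsupp.degree_eq_zero_iff α).mp hα
    have h1 : (monomial α c : MvPolynomial (Fin (n + 1)) ℂ) =
        c • ∏ i ∈ (∅ : Finset (Fin (δ + n))), linForm (h i) := by
      simp [hα0, smul_eq_C_mul, ← C_eq_smul_one]
    rw [h1]
    exact Submodule.smul_mem _ _ (Submodule.subset_span ⟨∅, rfl, rfl⟩)
  | succ e ih =>
    intro hd α hα c
    have hα0 : α ≠ 0 := by
      intro h0; rw [h0] at hα; simp [map_zero] at hα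
    obtain ⟨k, hk⟩ := Finsupp.support_nonempty_iff.mpr hα0
    have hk1 : 1 ≤ α k := Nat.one_le_iff_ne_zero.mpr (Finsupp.mem_support_iff.mp hk)
    set β := α - Finsupp.single k 1 with hβ
    have hle : Finsupp.single k 1 ≤ α := Finsupp.single_le_iff.mpr hk1
    have hαβ : Finsupp.single k 1 + β = α := by
      exact add_tsub_cancel_of_le hle
    have hβdeg : β.degree = e := by
      have h2 := congrArg Finsupp.degree hαβ
      have h3 : (Finsupp.single k 1 + β).degree
          = (Finsupp.single k 1 : Fin (n+1) →₀ ℕ).degree + β.degree := by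
        simp [Finsupp.degree_eq_weight_one, map_add]
      have h4 : (Finsupp.single k 1 : Fin (n+1) →₀ ℕ).degree = 1 := by
        exact Finsupp.degree_single k 1
      rw [h3, h4, hα] at h2
      omega
    have hsp : (monomial β 1 : MvPolynomial (Fin (n + 1)) ℂ) ∈
        Submodule.span ℂ {p | ∃ I : Finset (Fin (δ + n)), I.card = e ∧
          p = ∏ i ∈ I, linForm (h i)} := ih (by omega) β hβdeg 1
    have hmono : (monomial α c : MvPolynomial (Fin (n + 1)) ℂ) =
        c • (MvPolynomial.X k * monomial β 1) := by
      rw [X, monomial_mul, hαβ, one_mul, smul_monomial, smul_eq_mul, mul_one]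
    rw [hmono]
    refine Submodule.smul_mem _ _ ?_
    refine Submodule.span_induction ?_ ?_ ?_ ?_ hsp
    · rintro q ⟨I, hI, rfl⟩
      exact key n δ e hd h hgen k I hI
    · simp
    · intro x y _ _ hx hy
      rw [mul_add]; exact Submodule.add_mem _ hx hy
    · intro a x _ hx
      rw [mul_smul_comm]; exact Submodule.smul_mem _ _ hx

/-- Let `h_1, …, h_{δ+n}` be general linear forms on `ℂ^{n+1}` (any `n+1` of them linearly
independent), with `δ ≥ 1`.  For `d ≤ δ`, the products `h_I = ∏_{i∈I} h_i` over all subsets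
`I ⊆ {1,…,δ+n}` with `|I| = d` span the space `S^d(ℂ^{n+1})^*` of degree-`d` forms. -/
theorem prods_span (n δ d : ℕ) (hδ : 1 ≤ δ) (hd : d ≤ δ)
    (h : Fin (δ + n) → (Fin (n + 1) → ℂ))
    (hgen : ∀ T : Finset (Fin (δ + n)), T.card = n + 1 →
      LinearIndependent ℂ (fun i : T => h i)) :
    MvPolynomial.homogeneousSubmodule (Fin (n + 1)) ℂ d ≤
      Submodule.span ℂ {p | ∃ I : Finset (Fin (δ + n)), I.card = d ∧
        p = ∏ i ∈ I, linForm (h i)} := by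
  intro p hp
  rw [mem_homogeneousSubmodule] at hp
  rw [p.as_sum]
  refine Submodule.sum_mem _ fun α hα => ?_
  have hdeg : α.degree = d := by
    rw [Finsupp.degree_eq_weight_one]
    exact hp (Finsupp.mem_support_iff.mp hα)
  exact monomial_mem n δ h hgen d hd α hdeg _
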